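/- Let p, q ∈ [0,1], and over the complex 2×2 matrices define X = !![0,1;1,0], Y = !![0,-i;i,0], Z = !![1,0;0,-1], D₀ = √(1-p)·I₂, D₁ = √p·X, E₀ = √(1-q)·I₂, E₁ = √q·Z, the rank-one projectors P₀ = |0⟩⟨0|, P₁ = |1⟩⟨1| onto the standard basis states, and P₊ = |+⟩⟨+|, P₋ = |−⟩⟨−| with |±⟩ = (|0⟩±|1⟩)/√2. For i,j ∈ {0,1} define the 4×4 Kraus operators W_{ij} = (D_i E_j) ⊗ P₀ + (E_j D_i) ⊗ P₁ (Kronecker product). Then for every complex 2×2 matrix ρ: Σ_{i,j∈{0,1}} W_{ij} (ρ ⊗ P₊) W_{ij}† = ((1-p)(1-q)·ρ + p(1-q)·XρX + (1-p)q·ZρZ) ⊗ P₊ + pq·(YρY) ⊗ P₋. -/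
import Mathlib


open Matrix Kronecker

noncomputable section

/-- Pauli X. -/
def PX : Matrix (Fin 2) (Fin 2) ℂ := !![0, 1; 1, 0]

/-- Pauli Y. -/
def PY : Matrix (Fin 2) (Fin 2) ℂ := !![0, -Complex.I; Complex.I, 0]

/-- Pauli Z. -/
def PZ : Matrix (Fin 2) (Fin 2) ℂ := !![1, 0; 0, -1]

/-- Kraus operators of the bit-flip channel: `D₀ = √(1-p)·I₂`, `D₁ = √p·X`. -/
def Dk (p : ℝ) : Fin 2 → Matrix (Fin 2) (Fin 2) ℂ :=
  ![((Real.sqrt (1 - p) : ℝ) : ℂ) • (1 : Matrix (Fin 2) (Fin 2) ℂ),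
    ((Real.sqrt p : ℝ) : ℂ) • PX]

/-- Kraus operators of the phase-flip channel: `E₀ = √(1-q)·I₂`, `E₁ = √q·Z`. -/
def Ek (q : ℝ) : Fin 2 → Matrix (Fin 2) (Fin 2) ℂ :=
  ![((Real.sqrt (1 - q) : ℝ) : ℂ) • (1 : Matrix (Fin 2) (Fin 2) ℂ),
    ((Real.sqrt q : ℝ) : ℂ) • PZ]

/-- `P₀ = |0⟩⟨0|`. -/
def P0 : Matrix (Fin 2) (Fin 2) ℂ := !![1, 0; 0, 0]

/-- `P₁ = |1⟩⟨1|`. -/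
def P1 : Matrix (Fin 2) (Fin 2) ℂ := !![0, 0; 0, 1]

/-- `P₊ = |+⟩⟨+|` with `|+⟩ = (|0⟩+|1⟩)/√2`. -/
def Pplus : Matrix (Fin 2) (Fin 2) ℂ := !![1/2, 1/2; 1/2, 1/2]

/-- `P₋ = |−⟩⟨−|` with `|−⟩ = (|0⟩−|1⟩)/√2`. -/
def Pminus : Matrix (Fin 2) (Fin 2) ℂ := !![1/2, -(1/2); -(1/2), 1/2]

/-- Kraus operators of the quantum switch:
`W_{ij} = (D_i E_j) ⊗ P₀ + (E_j D_i) ⊗ P₁`. -/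
def W (p q : ℝ) (i j : Fin 2) : Matrix (Fin 2 × Fin 2) (Fin 2 × Fin 2) ℂ :=
  (Dk p i * Ek q j) ⊗ₖ P0 + (Ek q j * Dk p i) ⊗ₖ P1

set_option maxHeartbeats 4000000 in
theorem quantum_switch_action (p q : ℝ) (hp : p ∈ Set.Icc (0:ℝ) 1)
    (hq : q ∈ Set.Icc (0:ℝ) 1) (ρ : Matrix (Fin 2) (Fin 2) ℂ) :
    ∑ i : Fin 2, ∑ j : Fin 2, W p q i j * (ρ ⊗ₖ Pplus) * (W p q i j)ᴴ =
      ((((1 - p) * (1 - q) : ℝ) : ℂ) • ρ + ((p * (1 - q) : ℝ) : ℂ) • (PX * ρ * PX) +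
          (((1 - p) * q : ℝ) : ℂ) • (PZ * ρ * PZ)) ⊗ₖ Pplus +
        ((p * q : ℝ) : ℂ) • ((PY * ρ * PY) ⊗ₖ Pminus) := by
  obtain ⟨hp0, hp1⟩ := hp
  obtain ⟨hq0, hq1⟩ := hq
  have ha : ((Real.sqrt p : ℝ) : ℂ) * ((Real.sqrt p : ℝ) : ℂ) = (p : ℂ) := by
    norm_cast; exact Real.mul_self_sqrt hp0
  have hb : ((Real.sqrt (1-p) : ℝ) : ℂ) * ((Real.sqrt (1-p) : ℝ) : ℂ) = ((1-p : ℝ) : ℂ) := by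
    norm_cast; exact Real.mul_self_sqrt (by linarith)
  have hc : ((Real.sqrt q : ℝ) : ℂ) * ((Real.sqrt q : ℝ) : ℂ) = (q : ℂ) := by
    norm_cast; exact Real.mul_self_sqrt hq0
  have hd : ((Real.sqrt (1-q) : ℝ) : ℂ) * ((Real.sqrt (1-q) : ℝ) : ℂ) = ((1-q : ℝ) : ℂ) := by
    norm_cast; exact Real.mul_self_sqrt (by linarith)
  have e1 : (((1-p)*(1-q) : ℝ) : ℂ)
      = ((Real.sqrt (1-p) : ℝ):ℂ) * ((Real.sqrt (1-p) : ℝ):ℂ)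
        * (((Real.sqrt (1-q) : ℝ):ℂ) * ((Real.sqrt (1-q) : ℝ):ℂ)) := by
    rw [hb, hd]; push_cast; ring
  have e2 : ((p*(1-q) : ℝ) : ℂ)
      = ((Real.sqrt p : ℝ):ℂ) * ((Real.sqrt p : ℝ):ℂ)
        * (((Real.sqrt (1-q) : ℝ):ℂ) * ((Real.sqrt (1-q) : ℝ):ℂ)) := by
    rw [ha, hd]; push_cast; ring
  have e3 : (((1-p)*q : ℝ) : ℂ)
      = ((Real.sqrt (1-p) : ℝ):ℂ) * ((Real.sqrt (1-p) : ℝ):ℂ)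
        * (((Real.sqrt q : ℝ):ℂ) * ((Real.sqrt q : ℝ):ℂ)) := by
    rw [hb, hc]; push_cast; ring
  have e4 : ((p*q : ℝ) : ℂ)
      = ((Real.sqrt p : ℝ):ℂ) * ((Real.sqrt p : ℝ):ℂ)
        * (((Real.sqrt q : ℝ):ℂ) * ((Real.sqrt q : ℝ):ℂ)) := by
    rw [ha, hc]; push_cast; ring
  have hY : PY * ρ * PY = PX * (PZ * ρ * PZ) * PX := by
    ext i j
    fin_cases i <;> fin_cases j <;>
      simp only [PY, PX, PZ, Matrix.mul_apply, Fin.sum_univ_two, Matrix.neg_apply,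
        Matrix.cons_val', Matrix.cons_val_zero, Matrix.cons_val_one, Matrix.head_cons,
        Matrix.empty_val', Matrix.cons_val_fin_one, Matrix.head_fin_const,
        Matrix.of_apply, Fin.mk_zero, Fin.mk_one, Fin.isValue, Complex.I_mul_I,
        mul_zero, zero_mul, mul_one, one_mul, add_zero, zero_add, neg_mul, mul_neg,
        neg_neg] <;>
      ring_nf <;> simp [Complex.I_sq]
  rw [e1, e2, e3, e4, hY]
  ext ⟨i, k⟩ ⟨j, l⟩
  fin_cases i <;> fin_cases k <;> fin_cases j <;> fin_cases l <;>
    simp only [W, Dk, Ek, PX, PY, PZ, P0, P1, Pplus, Pminus, Matrix.one_fin_two,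
      Matrix.sum_apply, Matrix.add_apply, Matrix.mul_apply, Matrix.smul_apply,
      Matrix.kroneckerMap_apply, Matrix.conjTranspose_apply, Fin.sum_univ_two, Fintype.sum_prod_type,
      Fin.mk_zero, Fin.mk_one, Fin.isValue, Matrix.cons_val', Matrix.cons_val_zero,
      Matrix.cons_val_one, Matrix.head_cons, Matrix.head_fin_const, Matrix.empty_val',
      Matrix.cons_val_fin_one, Matrix.of_apply, smul_eq_mul, Complex.star_def,
      _root_.map_mul, _root_.map_add, map_neg, map_zero, _root_.map_one, map_div₀, map_ofNat,
      Complex.conj_ofReal] <;>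
    ring


end
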